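/- For every fixed integer m ≥ 0, the function X ↦ X · I_m'(X) / I_m(X) is strictly increasing on (0, ∞), where I_m denotes the modified Bessel function of the first kind of order m. Consequently, for every α > 0 the equation X · I_m'(X) / I_m(X) = α has at most one solution X ∈ (0, ∞). -/

import Mathlib

/-- The modified Bessel function of the first kind of (integer) order `m`,
defined by its power series `I_m(X) = ∑_{n≥0} (X/2)^(2n+|m|) / (n! (n+|m|)!)`. -/
noncomputable def besselI (m : ℤ) (X : ℝ) : ℝ :=
  ∑' n : ℕ, (X / 2) ^ (2 * n + m.natAbs) / ((n.factorial : ℝ) * ((n + m.natAbs).factorial : ℝ))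

open Filter Topology

namespace BesselAux

/-- coefficient of `X^(2n+μ)` in the series. -/
noncomputable def aa (μ n : ℕ) : ℝ :=
  ((1:ℝ)/2) ^ (2*n+μ) / ((n.factorial : ℝ) * ((n + μ).factorial : ℝ))

lemma aa_pos (μ n : ℕ) : 0 < aa μ n := by
  unfold aa
  have h1 : (0:ℝ) < (n.factorial : ℝ) := by exact_mod_cast n.factorial_pos
  have h2 : (0:ℝ) < ((n + μ).factorial : ℝ) := by exact_mod_cast (n + μ).factorial_pos
  positivity

/-- generic term `(2n+μ)^k · a_n · x^(2n+μ)`. -/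
noncomputable def term (μ k : ℕ) (x : ℝ) (n : ℕ) : ℝ :=
  ((2*n+μ : ℕ) : ℝ)^k * aa μ n * x^(2*n+μ)

noncomputable def T (μ k : ℕ) (x : ℝ) : ℝ := ∑' n, term μ k x n

lemma term_nonneg (μ k : ℕ) {R : ℝ} (hR : 0 ≤ R) (n : ℕ) : 0 ≤ term μ k R n := by
  have := aa_pos μ n
  unfold term
  positivity

lemma summable_aux (k : ℕ) : Summable (fun n : ℕ => ((n:ℝ)+1)^k * (1/2:ℝ)^n) := by
  have h : Summable (fun n : ℕ => (n:ℝ)^k * (1/2:ℝ)^n) :=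
    summable_pow_mul_geometric_of_norm_lt_one k
      (by rw [Real.norm_eq_abs, abs_of_nonneg (by norm_num : (0:ℝ) ≤ 1/2)]; norm_num)
  have h1 : Summable (fun n : ℕ => ((n+1:ℕ):ℝ)^k * (1/2:ℝ)^(n+1)) :=
    (summable_nat_add_iff 1).mpr h
  have h2 := h1.mul_left 2
  apply h2.congr
  intro n
  push_cast
  ring

lemma term_le (μ k : ℕ) {R : ℝ} (hR : 0 ≤ R) (n : ℕ) :
    term μ k R n ≤ (((μ:ℝ)+2)^k * (R/2)^μ * Real.exp (R^2/2)) * (((n:ℝ)+1)^k * (1/2:ℝ)^n) := by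
  have hfac1 : (0:ℝ) < (n.factorial : ℝ) := by exact_mod_cast n.factorial_pos
  have hfac2 : (1:ℝ) ≤ ((n + μ).factorial : ℝ) := by
    exact_mod_cast Nat.one_le_iff_ne_zero.mpr (n + μ).factorial_ne_zero
  have hp : ((1:ℝ)/2)^(2*n+μ) * R^(2*n+μ) = (R/2)^μ * (R^2/4)^n := by
    rw [← mul_pow, show ((1:ℝ)/2*R) = R/2 by ring,
      show (R^2/4 : ℝ) = (R/2)^2 by ring, ← pow_mul, ← pow_add]
    congr 1
    omega
  have hv : ((2*n+μ : ℕ) : ℝ)^k ≤ (((μ:ℝ)+2)*((n:ℝ)+1))^k := by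
    apply pow_le_pow_left₀ (by positivity)
    push_cast
    nlinarith [Nat.cast_nonneg (α := ℝ) n, Nat.cast_nonneg (α := ℝ) μ]
  calc term μ k R n
      = ((2*n+μ : ℕ) : ℝ)^k * ((R/2)^μ * (R^2/4)^n) /
          ((n.factorial : ℝ) * ((n + μ).factorial : ℝ)) := by
        unfold term aa
        rw [← hp]
        ring
    _ ≤ ((2*n+μ : ℕ) : ℝ)^k * ((R/2)^μ * (R^2/4)^n) / ((n.factorial : ℝ) * 1) := by
        apply div_le_div_of_nonneg_left (by positivity) (by positivity)
        nlinarith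
    _ = ((2*n+μ : ℕ) : ℝ)^k * (R/2)^μ * ((R^2/2)^n / (n.factorial : ℝ)) * (1/2:ℝ)^n := by
        rw [show (R^2/4 : ℝ) = R^2/2 * (1/2) by ring, mul_pow]
        ring
    _ ≤ ((2*n+μ : ℕ) : ℝ)^k * (R/2)^μ * Real.exp (R^2/2) * (1/2:ℝ)^n := by
        have hle : (R^2/2)^n / (n.factorial : ℝ) ≤ Real.exp (R^2/2) :=
          Real.pow_div_factorial_le_exp _ (by positivity) n
        gcongr
    _ ≤ (((μ:ℝ)+2)*((n:ℝ)+1))^k * (R/2)^μ * Real.exp (R^2/2) * (1/2:ℝ)^n := by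
        gcongr
    _ = (((μ:ℝ)+2)^k * (R/2)^μ * Real.exp (R^2/2)) * (((n:ℝ)+1)^k * (1/2:ℝ)^n) := by
        rw [mul_pow]
        ring

lemma summable_term (μ k : ℕ) {R : ℝ} (hR : 0 ≤ R) : Summable (term μ k R) :=
  Summable.of_nonneg_of_le (term_nonneg μ k hR) (term_le μ k hR)
    (((summable_aux k).mul_left _))

lemma summable_term_of_abs_le (μ k : ℕ) {R x : ℝ} (hR : 0 ≤ R) (hx : |x| ≤ R) :
    Summable (fun n => term μ k x n) := by
  apply Summable.of_norm_bounded (summable_term μ k hR)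
  intro n
  have := aa_pos μ n
  calc ‖term μ k x n‖ = ((2*n+μ : ℕ) : ℝ)^k * aa μ n * |x|^(2*n+μ) := by
        unfold term
        simp only [Real.norm_eq_abs, abs_mul, abs_pow, Nat.abs_cast, abs_of_nonneg this.le]
    _ ≤ term μ k R n := by
        unfold term
        gcongr

lemma hasDerivAt_T (μ k : ℕ) {x : ℝ} (hx : 0 < x) :
    HasDerivAt (T μ k) (T μ (k+1) x / x) x := by
  set R : ℝ := x + 1 with hRdef
  have hR0 : (0:ℝ) < R := by simp only [hRdef]; linarith
  set s : Set ℝ := Set.Ioo (-R) R with hsdef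
  have hxs : x ∈ s := by
    constructor <;> simp only [hRdef] <;> linarith
  have hs : IsOpen s := isOpen_Ioo
  set dterm : ℕ → ℝ → ℝ := fun n y =>
    ((2*n+μ : ℕ) : ℝ)^k * aa μ n * (((2*n+μ : ℕ) : ℝ) * y^(2*n+μ-1)) with hdtdef
  have hderiv_each : ∀ (n : ℕ) (y : ℝ), HasDerivAt (fun z => term μ k z n) (dterm n y) y := by
    intro n y
    exact (hasDerivAt_pow (2*n+μ) y).const_mul (((2*n+μ : ℕ) : ℝ)^k * aa μ n)
  set u : ℕ → ℝ := fun n => term μ (k+1) R n / R with hudef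
  have hu : Summable u := (summable_term μ (k+1) hR0.le).div_const R
  have hbound : ∀ (n : ℕ) (y : ℝ), y ∈ s → ‖dterm n y‖ ≤ u n := by
    intro n y hy
    have hyR : |y| ≤ R := by
      rw [abs_le]
      exact ⟨hy.1.le, hy.2.le⟩
    have haa := aa_pos μ n
    rcases Nat.eq_zero_or_pos (2*n+μ) with he | he
    · simp only [hdtdef, hudef, he]
      unfold term
      norm_num
      positivity
    · have hRe : R^(2*n+μ) / R = R^(2*n+μ-1) := by
        nth_rewrite 1 [show 2*n+μ = (2*n+μ-1) + 1 by omega]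
        rw [pow_succ, mul_div_assoc, div_self hR0.ne', mul_one]
      have : ‖dterm n y‖ = ((2*n+μ : ℕ) : ℝ)^k * aa μ n * (((2*n+μ : ℕ) : ℝ) * |y|^(2*n+μ-1)) := by
        simp only [hdtdef]
        simp only [Real.norm_eq_abs, abs_mul, abs_pow, Nat.abs_cast, abs_of_nonneg haa.le]
      rw [this]
      simp only [hudef]
      have hyRn : |y|^(2*n+μ-1) ≤ R^(2*n+μ-1) := by
        gcongr
      rw [le_div_iff₀ hR0]
      have hRe' : R^(2*n+μ) = R^(2*n+μ-1)*R := by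
        nth_rewrite 1 [show 2*n+μ = (2*n+μ-1)+1 by omega]
        rw [pow_succ]
      unfold term
      rw [hRe', pow_succ ((2*n+μ : ℕ) : ℝ) k]
      calc ((2*n+μ : ℕ) : ℝ)^k * aa μ n * (((2*n+μ : ℕ) : ℝ) * |y|^(2*n+μ-1)) * R
          = (((2*n+μ : ℕ) : ℝ)^k * aa μ n * ((2*n+μ : ℕ) : ℝ) * R) * |y|^(2*n+μ-1) := by ring
        _ ≤ (((2*n+μ : ℕ) : ℝ)^k * aa μ n * ((2*n+μ : ℕ) : ℝ) * R) * R^(2*n+μ-1) := by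
            apply mul_le_mul_of_nonneg_left hyRn
            positivity
        _ = ((2*n+μ : ℕ) : ℝ)^k * ((2*n+μ : ℕ) : ℝ) * aa μ n * (R^(2*n+μ-1)*R) := by ring
  have htu : TendstoUniformlyOn (fun N y => ∑ n ∈ Finset.range N, dterm n y)
      (fun y => ∑' n, dterm n y) atTop s := tendstoUniformlyOn_tsum_nat hu hbound
  have hfg : ∀ y ∈ s, Tendsto (fun N => ∑ n ∈ Finset.range N, term μ k y n) atTop
      (𝓝 (T μ k y)) := by
    intro y hy
    have hyR : |y| ≤ R := by
      rw [abs_le]; exact ⟨hy.1.le, hy.2.le⟩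
    exact (summable_term_of_abs_le μ k hR0.le hyR).hasSum.tendsto_sum_nat
  have main : HasDerivAt (T μ k) (∑' n, dterm n x) x := by
    apply hasDerivAt_of_tendstoUniformlyOn hs htu _ hfg hxs
    exact Eventually.of_forall fun N y _ => HasDerivAt.fun_sum fun n _ => hderiv_each n y
  have heq : (∑' n, dterm n x) = T μ (k+1) x / x := by
    have : ∀ n, dterm n x = term μ (k+1) x n / x := by
      intro n
      simp only [hdtdef]
      unfold term
      rcases Nat.eq_zero_or_pos (2*n+μ) with he | he
      · simp [he]
      · have hxe : x^(2*n+μ) / x = x^(2*n+μ-1) := by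
          nth_rewrite 1 [show 2*n+μ = (2*n+μ-1) + 1 by omega]
          rw [pow_succ, mul_div_assoc, div_self hx.ne', mul_one]
        rw [pow_succ ((2*n+μ : ℕ) : ℝ) k, mul_div_assoc, hxe]
        ring
    rw [tsum_congr this, tsum_div_const]
    rfl
  rwa [heq] at main

lemma T0_pos (μ : ℕ) {x : ℝ} (hx : 0 < x) : 0 < T μ 0 x := by
  have hsum := summable_term μ 0 hx.le
  have h0 : 0 < term μ 0 x 0 := by
    unfold term
    have := aa_pos μ 0
    positivity
  exact h0.trans_le (Summable.le_tsum hsum 0 fun j _ => term_nonneg μ 0 hx.le j)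

lemma cs_pos (μ : ℕ) {x : ℝ} (hx : 0 < x) :
    0 < T μ 2 x * T μ 0 x - (T μ 1 x)^2 := by
  have h0 := summable_term μ 0 hx.le
  have h1 := summable_term μ 1 hx.le
  have h2 := summable_term μ 2 hx.le
  have hT0 := T0_pos μ hx
  set lam : ℝ := T μ 1 x / T μ 0 x with hlam
  set q : ℕ → ℝ := fun n => (((2*n+μ : ℕ) : ℝ) - lam)^2 * (aa μ n * x^(2*n+μ)) with hqdef
  have hq_eq : ∀ n, q n = term μ 2 x n - (2*lam) * term μ 1 x n + lam^2 * term μ 0 x n := by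
    intro n
    simp only [hqdef]
    unfold term
    ring
  have hq_nonneg : ∀ n, 0 ≤ q n := by
    intro n
    have := aa_pos μ n
    simp only [hqdef]
    positivity
  have hqs : Summable q := by
    apply Summable.congr _ (fun n => (hq_eq n).symm)
    exact (h2.sub (h1.mul_left (2*lam))).add (h0.mul_left (lam^2))
  have htsum : ∑' n, q n = T μ 2 x - (2*lam) * T μ 1 x + lam^2 * T μ 0 x := by
    calc ∑' n, q n
        = ∑' n, (term μ 2 x n - (2*lam) * term μ 1 x n + lam^2 * term μ 0 x n) :=
          tsum_congr hq_eq
      _ = (∑' n, (term μ 2 x n - (2*lam) * term μ 1 x n)) + ∑' n, lam^2 * term μ 0 x n :=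
          Summable.tsum_add (h2.sub (h1.mul_left (2*lam))) (h0.mul_left (lam^2))
      _ = ((∑' n, term μ 2 x n) - ∑' n, (2*lam) * term μ 1 x n) + ∑' n, lam^2 * term μ 0 x n := by
          rw [Summable.tsum_sub h2 (h1.mul_left (2*lam))]
      _ = T μ 2 x - (2*lam) * T μ 1 x + lam^2 * T μ 0 x := by
          rw [tsum_mul_left, tsum_mul_left]
          rfl
  have hpos : 0 < ∑' n, q n := by
    by_cases hl : lam = ((μ:ℝ))
    · have hq1 : 0 < q 1 := by
        simp only [hqdef, hl]
        have := aa_pos μ 1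
        have : (((2*1+μ : ℕ) : ℝ) - (μ:ℝ))^2 = 4 := by push_cast; ring
        rw [this]
        have := aa_pos μ 1
        positivity
      exact hq1.trans_le (Summable.le_tsum hqs 1 fun j _ => hq_nonneg j)
    · have hq0 : 0 < q 0 := by
        simp only [hqdef]
        have haa := aa_pos μ 0
        have hne : (((2*0+μ : ℕ) : ℝ) - lam) ≠ 0 := by
          push_cast
          intro h
          apply hl
          linarith
        have hsq : 0 < (((2*0+μ : ℕ) : ℝ) - lam)^2 := by
          rcases hne.lt_or_gt with h | h <;> nlinarith
        positivity
      exact hq0.trans_le (Summable.le_tsum hqs 0 fun j _ => hq_nonneg j)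
  rw [htsum] at hpos
  have hexpand : (T μ 2 x - (2*lam) * T μ 1 x + lam^2 * T μ 0 x) * T μ 0 x
      = T μ 2 x * T μ 0 x - (T μ 1 x)^2 := by
    rw [hlam]
    field_simp
    ring
  nlinarith [mul_pos hpos hT0]

lemma hasDerivAt_ratio (μ : ℕ) {x : ℝ} (hx : 0 < x) :
    HasDerivAt (fun y => T μ 1 y / T μ 0 y)
      ((T μ 2 x * T μ 0 x - (T μ 1 x)^2) / (x * (T μ 0 x)^2)) x := by
  have h1 := hasDerivAt_T μ 1 hx
  have h0 := hasDerivAt_T μ 0 hx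
  have hT0 := T0_pos μ hx
  have := h1.div h0 hT0.ne'
  refine HasDerivAt.congr_deriv this ?_
  field_simp

lemma ratio_strictMono (μ : ℕ) : StrictMonoOn (fun X => T μ 1 X / T μ 0 X) (Set.Ioi 0) := by
  apply strictMonoOn_of_deriv_pos (convex_Ioi 0)
  · intro x hx
    exact ((hasDerivAt_ratio μ hx).continuousAt).continuousWithinAt
  · intro x hx
    rw [interior_Ioi] at hx
    rw [(hasDerivAt_ratio μ hx).deriv]
    exact div_pos (cs_pos μ hx) (mul_pos hx (pow_pos (T0_pos μ hx) 2))

end BesselAux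

open BesselAux

lemma besselI_eq_T (m : ℤ) : besselI m = T m.natAbs 0 := by
  funext X
  unfold besselI T term aa
  apply tsum_congr
  intro n
  rw [pow_zero, one_mul, show (X/2 : ℝ) = (1/2)*X by ring, mul_pow]
  ring

theorem besselI_logderiv_strictMono (m : ℤ) (hm : 0 ≤ m) :
    StrictMonoOn (fun X : ℝ => X * deriv (besselI m) X / besselI m X) (Set.Ioi 0) ∧
    ∀ α : ℝ, 0 < α →
      ∀ X₁ ∈ Set.Ioi (0 : ℝ), ∀ X₂ ∈ Set.Ioi (0 : ℝ),
        X₁ * deriv (besselI m) X₁ / besselI m X₁ = α →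
        X₂ * deriv (besselI m) X₂ / besselI m X₂ = α → X₁ = X₂ := by
  set μ := m.natAbs with hμ
  have heq : ∀ X ∈ Set.Ioi (0:ℝ),
      X * deriv (besselI m) X / besselI m X = T μ 1 X / T μ 0 X := by
    intro X hX
    rw [Set.mem_Ioi] at hX
    rw [besselI_eq_T, (hasDerivAt_T μ 0 hX).deriv]
    rw [show X * (T μ 1 X / X) = T μ 1 X by field_simp]
  have hmono : StrictMonoOn (fun X : ℝ => X * deriv (besselI m) X / besselI m X)
      (Set.Ioi 0) := by
    intro a ha b hb hab
    simp only
    rw [heq a ha, heq b hb]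
    exact ratio_strictMono μ ha hb hab
  refine ⟨hmono, fun α _ X₁ hX₁ X₂ hX₂ h1 h2 => ?_⟩
  exact hmono.injOn hX₁ hX₂ (by rw [h1, h2])
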